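/- Let V ⊆ 𝔽₂ᵏ be a binary code such that the weight of every element of V is divisible by 4, and let m be the number of coordinates in the support of V. If dim V ≥ 4, then m ≥ 8. -/

import Mathlib

open scoped Classical in
/-- If `V ⊆ 𝔽₂ᵏ` is a binary code all of whose weights are divisible
by `4`, `m` is the number of coordinates in the support of `V`, and `dim V ≥ 4`,
then `m ≥ 8`. -/
theorem doubly_even_code_dim_ge_four_support_ge_eight (k : ℕ)
    (V : Submodule (ZMod 2) (Fin k → ZMod 2))
    (hV : ∀ v ∈ V, 4 ∣ (Finset.univ.filter fun i => v i ≠ 0).card)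
    (m : ℕ)
    (hm : m = (Finset.univ.filter fun i => ∃ v ∈ V, v i ≠ 0).card)
    (hr : 4 ≤ Module.finrank (ZMod 2) V) :
    8 ≤ m := by
  classical
  set S : Finset (Fin k) := Finset.univ.filter fun i => ∃ v ∈ V, v i ≠ 0 with hS
  -- elements of V vanish off S
  have hoff : ∀ v ∈ V, ∀ i : Fin k, i ∉ S → v i = 0 := by
    intro v hv i hi
    by_contra h
    exact hi (by simp [hS, Finset.mem_filter]; exact ⟨v, hv, h⟩)
  -- key: for v, w ∈ V, the intersection of supports is even
  have hkey : ∀ v ∈ V, ∀ w ∈ V,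
      2 ∣ (Finset.univ.filter fun i => v i ≠ 0 ∧ w i ≠ 0).card := by
    intro v hv w hw
    have h1 := hV v hv
    have h2 := hV w hw
    have h3 := hV (v + w) (V.add_mem hv hw)
    have hsplit : (Finset.univ.filter fun i => v i ≠ 0).card
        = (Finset.univ.filter fun i => v i ≠ 0 ∧ w i ≠ 0).card
          + (Finset.univ.filter fun i => v i ≠ 0 ∧ w i = 0).card := by
      rw [← Finset.card_union_of_disjoint]
      · congr 1
        ext i
        simp only [Finset.mem_union, Finset.mem_filter, Finset.mem_univ, true_and]
        tauto
      · rw [Finset.disjoint_filter]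
        tauto
    have hsplit' : (Finset.univ.filter fun i => w i ≠ 0).card
        = (Finset.univ.filter fun i => v i ≠ 0 ∧ w i ≠ 0).card
          + (Finset.univ.filter fun i => v i = 0 ∧ w i ≠ 0).card := by
      rw [← Finset.card_union_of_disjoint]
      · congr 1
        ext i
        simp only [Finset.mem_union, Finset.mem_filter, Finset.mem_univ, true_and]
        tauto
      · rw [Finset.disjoint_filter]
        tauto
    have hsum : (Finset.univ.filter fun i => (v + w) i ≠ 0).card
        = (Finset.univ.filter fun i => v i ≠ 0 ∧ w i = 0).card
          + (Finset.univ.filter fun i => v i = 0 ∧ w i ≠ 0).card := by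
      rw [← Finset.card_union_of_disjoint]
      · congr 1
        ext i
        simp only [Finset.mem_union, Finset.mem_filter, Finset.mem_univ, true_and,
          Pi.add_apply]
        revert hV
        generalize v i = a
        generalize w i = b
        intro _
        revert a b
        decide
      · rw [Finset.disjoint_filter]
        tauto
    omega
  -- restriction to S is injective on V
  set ρ : (Fin k → ZMod 2) →ₗ[ZMod 2] (↥S → ZMod 2) :=
    LinearMap.funLeft (ZMod 2) (ZMod 2) (fun i : S => (i : Fin k)) with hρ
  set V' : Submodule (ZMod 2) (↥S → ZMod 2) := V.map ρ with hV'
  have hinj : Function.Injective (ρ.comp V.subtype) := by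
    rw [← LinearMap.ker_eq_bot]
    rw [LinearMap.ker_eq_bot']
    rintro ⟨v, hv⟩ h
    ext i
    by_cases hiS : i ∈ S
    · have := congrFun h ⟨i, hiS⟩
      simpa [hρ, LinearMap.funLeft] using this
    · simpa using hoff v hv i hiS
  have hrank : Module.finrank (ZMod 2) V' = Module.finrank (ZMod 2) V := by
    have e := LinearEquiv.ofInjective (ρ.comp V.subtype) hinj
    have hrange : LinearMap.range (ρ.comp V.subtype) = V' := by
      rw [LinearMap.range_comp, Submodule.range_subtype]
    rw [← hrange]
    exact e.finrank_eq.symm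
  -- the standard bilinear form on S → ZMod 2
  set B : LinearMap.BilinForm (ZMod 2) (↥S → ZMod 2) :=
    LinearMap.mk₂ (ZMod 2) (fun v w => ∑ i, v i * w i)
      (by intro x y z; simp [add_mul, Finset.sum_add_distrib])
      (by intro c x y; simp [Finset.mul_sum, mul_assoc])
      (by intro x y z; simp [mul_add, Finset.sum_add_distrib])
      (by intro c x y; simp [Finset.mul_sum, mul_left_comm]) with hB
  have hBapp : ∀ v w, B v w = ∑ i, v i * w i := fun v w => rfl
  have hrefl : B.IsRefl := by
    intro x y h
    rw [hBapp] at h ⊢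
    simpa [mul_comm] using h
  have hnd : B.Nondegenerate := by
    refine ⟨?_, ?_⟩ <;>
    · intro x hx
      ext i
      have := hx (Pi.single i 1)
      rw [hBapp] at this
      simpa [Pi.single_apply, mul_ite, ite_mul, Finset.sum_ite_eq, Finset.sum_ite_eq'] using this
  -- V' is self-orthogonal
  have hselforth : V' ≤ B.orthogonal V' := by
    rintro x ⟨w, hw, rfl⟩ y ⟨v, hv, rfl⟩
    show B (ρ v) (ρ w) = 0
    rw [hBapp]
    have hcoe : ∑ i : S, (ρ v) i * (ρ w) i = ∑ i ∈ S, v i * w i := by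
      rw [← Finset.sum_attach S (fun i => v i * w i)]
      rfl
    rw [hcoe]
    have hext : ∑ i ∈ S, v i * w i = ∑ i, v i * w i := by
      apply Finset.sum_subset (Finset.subset_univ S)
      intro i _ hi
      rw [hoff v hv i hi, zero_mul]
    rw [hext]
    have : ∑ i, v i * w i
        = ∑ i ∈ Finset.univ.filter (fun i => v i ≠ 0 ∧ w i ≠ 0), (1 : ZMod 2) := by
      rw [Finset.sum_filter]
      apply Finset.sum_congr rfl
      intro i _
      revert hV
      generalize v i = a
      generalize w i = b
      intro _
      revert a b
      decide
    rw [this, Finset.sum_const, nsmul_eq_mul, mul_one]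
    have := hkey v hv w hw
    exact (ZMod.natCast_eq_zero_iff _ 2).mpr this
  -- dimension count
  haveI : FiniteDimensional (ZMod 2) (↥S → ZMod 2) := by
    infer_instance
  have horth := LinearMap.BilinForm.finrank_orthogonal hnd V'
  have hmono := Submodule.finrank_mono hselforth
  have hamb : Module.finrank (ZMod 2) (↥S → ZMod 2) = m := by
    rw [Module.finrank_pi, Fintype.card_coe, hm]
  rw [horth, hamb, hrank] at hmono
  rw [hrank] at horth
  have hle : Module.finrank (ZMod 2) V ≤ m := by
    rw [← hamb, ← hrank]
    exact V'.finrank_le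
  omega
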